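/- Let k ≥ 2, let p = 2, and let V_0, V_1, V_2 be complex vector spaces with dim V_0 = k+1, dim V_1 = 2, dim V_2 = k (so matrices in V_0 ⊗ V_1 ⊗ V_2 have format (k+1) × 2 × k and are of boundary format, with k_0 = k, k_1 = 1, k_2 = k−1). Then every nondegenerate matrix A ∈ V_0 ⊗ V_1 ⊗ V_2 is an identity; consequently, any two nondegenerate matrices of this format are equivalent under the action of GL(V_0) × GL(V_1) × GL(V_2). -/

import Mathlib

open Module Finset

variable {p : ℕ} {V : Fin (p + 1) → Type*}
  [∀ j, AddCommGroup (V j)] [∀ j, Module ℂ (V j)] [∀ j, FiniteDimensional ℂ (V j)]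

/-- Nondegeneracy of a `(p+1)`-dimensional matrix, viewed as a multilinear form on duals. -/
def TensorNondegenerate (A : MultilinearMap ℂ (fun j : Fin (p + 1) => Module.Dual ℂ (V j)) ℂ) :
    Prop :=
  ∀ j : Fin (p + 1), j ≠ 0 →
    ∀ ξ : ∀ i, Module.Dual ℂ (V i), (∀ i, i ≠ 0 → i ≠ j → ξ i ≠ 0) →
      ∀ v : V j, ∃ φ : Module.Dual ℂ (V 0),
        ∀ lam : Module.Dual ℂ (V j),
          A (Function.update (Function.update ξ 0 φ) j lam) = lam v

/-- `A` is an identity matrix: in suitable bases its coefficients are `1` exactly when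
`i₀ = i₁ + ⋯ + i_p` and `0` otherwise. -/
def IsIdentityTensor (k : Fin (p + 1) → ℕ)
    (A : MultilinearMap ℂ (fun j : Fin (p + 1) => Module.Dual ℂ (V j)) ℂ) : Prop :=
  ∃ e : ∀ j, Basis (Fin (k j + 1)) ℂ (V j),
    ∀ ξ : ∀ i, Module.Dual ℂ (V i),
      A ξ = ∑ ind ∈ Finset.univ.filter
          (fun ind : ∀ j, Fin (k j + 1) =>
            (ind 0 : ℕ) = ∑ j ∈ Finset.univ.erase (0 : Fin (p + 1)), (ind j : ℕ)),
        ∏ j, ξ j (e j (ind j))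


private lemma pencil_exists_singular {X Y : Type*} [AddCommGroup X] [Module ℂ X]
    [AddCommGroup Y] [Module ℂ Y] [FiniteDimensional ℂ X] [FiniteDimensional ℂ Y]
    [Nontrivial X] (hfin : finrank ℂ X = finrank ℂ Y) (f g : X →ₗ[ℂ] Y) :
    ∃ a b : ℂ, (a ≠ 0 ∨ b ≠ 0) ∧ ∃ x : X, x ≠ 0 ∧ a • f x + b • g x = 0 := by
  by_cases hg : Function.Injective g
  · have hgs : Function.Surjective g :=
      (LinearMap.injective_iff_surjective_of_finrank_eq_finrank hfin).1 hg
    let ge : X ≃ₗ[ℂ] Y := LinearEquiv.ofBijective g ⟨hg, hgs⟩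
    obtain ⟨μ, hμ⟩ := Module.End.exists_eigenvalue (ge.symm.toLinearMap ∘ₗ f)
    obtain ⟨x, hx⟩ := hμ.exists_hasEigenvector
    refine ⟨1, -μ, Or.inl one_ne_zero, x, hx.2, ?_⟩
    have h1 : ge.symm (f x) = μ • x := hx.apply_eq_smul
    have h2 : f x = μ • g x := by
      have := congrArg ge h1
      simp [map_smul] at this
      exact this
    rw [h2]
    simp [smul_smul]
  · have : LinearMap.ker g ≠ ⊥ := by
      rwa [ne_eq, LinearMap.ker_eq_bot]
    obtain ⟨x, hxg, hx0⟩ := Submodule.exists_mem_ne_zero_of_ne_bot this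
    exact ⟨0, 1, Or.inr one_ne_zero, x, hx0, by simp [LinearMap.mem_ker.1 hxg]⟩

private lemma image_chain_linearIndependent {k : ℕ} {X Y : Type*} [AddCommGroup X] [Module ℂ X]
    [AddCommGroup Y] [Module ℂ Y]
    (M : X →ₗ[ℂ] Y) (v : ℕ → X)
    (hind : LinearIndependent ℂ (fun i : Fin (k + 1) => v i))
    (hker : LinearMap.ker M ≤ Submodule.span ℂ {v 0}) :
    LinearIndependent ℂ (fun j : Fin k => M (v (j + 1))) := by
  rw [Fintype.linearIndependent_iff]
  intro d hd j
  have hmem : (∑ j : Fin k, d j • v (j + 1)) ∈ LinearMap.ker M := by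
    rw [LinearMap.mem_ker, map_sum]
    simpa [map_smul] using hd
  obtain ⟨c, hc⟩ := Submodule.mem_span_singleton.1 (hker hmem)
  set g : Fin (k + 1) → ℂ := Fin.cases (-c) d with hg
  have hsum : ∑ i : Fin (k + 1), g i • v i = 0 := by
    rw [Fin.sum_univ_succ]
    simp only [hg, Fin.cases_zero, Fin.cases_succ, Fin.val_zero, Fin.val_succ]
    rw [← hc, neg_smul, neg_add_cancel]
  have hz := Fintype.linearIndependent_iff.1 hind g hsum
  simpa [hg] using hz (Fin.succ j)

private lemma chain_linearIndependent {k : ℕ} {X Y : Type*} [AddCommGroup X] [Module ℂ X]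
    [AddCommGroup Y] [Module ℂ Y] [FiniteDimensional ℂ X] [FiniteDimensional ℂ Y]
    (hX : finrank ℂ X = k + 1) (hY : finrank ℂ Y = k)
    (M N : X →ₗ[ℂ] Y)
    (hsurj : ∀ a b : ℂ, (a ≠ 0 ∨ b ≠ 0) → Function.Surjective (a • M + b • N))
    (v : ℕ → X) (hv0 : v 0 ≠ 0) (hM0 : M (v 0) = 0)
    (hker : LinearMap.ker M ≤ Submodule.span ℂ {v 0})
    (hrec : ∀ n, M (v (n + 1)) = N (v n)) :
    ∀ m, m ≤ k + 1 → LinearIndependent ℂ (fun i : Fin m => v i) := by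
  intro m
  induction m with
  | zero => intro _; exact linearIndependent_empty_type
  | succ m ih =>
    intro hm
    have hind : LinearIndependent ℂ (fun i : Fin m => v i) := ih (le_trans (Nat.le_succ m) hm)
    have heq : (fun i : Fin (m + 1) => v i) = Fin.snoc (fun i : Fin m => v i) (v m) := by
      funext i
      refine Fin.lastCases ?_ (fun j => ?_) i
      · simp
      · simp
    rw [heq, linearIndependent_fin_snoc]
    refine ⟨hind, fun hmem => ?_⟩
    rcases Nat.eq_zero_or_pos m with hm0 | hmpos
    · subst hm0
      simp only [Set.range_eq_empty, Submodule.span_empty, Submodule.mem_bot] at hmem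
      exact hv0 hmem
    · set U := Submodule.span ℂ (Set.range fun i : Fin m => v i) with hU
      have hv0U : v 0 ∈ U := Submodule.subset_span ⟨⟨0, hmpos⟩, rfl⟩
      set Z := Submodule.map M U with hZ
      have hNU : Submodule.map N U ≤ Z := by
        rw [hU, Submodule.map_span, Submodule.span_le]
        rintro y ⟨x, ⟨i, rfl⟩, rfl⟩
        have h1 : N (v i) = M (v (i + 1)) := (hrec i).symm
        rw [h1]
        rcases lt_or_eq_of_le (Nat.succ_le_of_lt i.isLt) with hlt | heq2
        · exact ⟨v (i + 1), Submodule.subset_span ⟨⟨i + 1, hlt⟩, rfl⟩, rfl⟩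
        · have : (i : ℕ) + 1 = m := heq2
          rw [this]; exact ⟨v m, hmem, rfl⟩
      have hfinU : finrank ℂ U = m := by simpa using finrank_span_eq_card hind
      have hkerM : LinearMap.ker M = Submodule.span ℂ {v 0} :=
        le_antisymm hker (Submodule.span_le.2 (Set.singleton_subset_iff.2 (LinearMap.mem_ker.2 hM0)))
      have hkle : LinearMap.ker M ≤ U := by
        rw [hkerM]; exact Submodule.span_le.2 (Set.singleton_subset_iff.2 hv0U)
      have hr := LinearMap.finrank_range_add_finrank_ker (M.domRestrict U)
      rw [LinearMap.range_domRestrict, LinearMap.ker_domRestrict] at hr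
      have h1 : finrank ℂ (Submodule.comap U.subtype (LinearMap.ker M)) = 1 := by
        rw [(Submodule.comapSubtypeEquivOfLe hkle).finrank_eq, hkerM]
        exact finrank_span_singleton hv0
      rw [h1, hfinU, ← hZ] at hr
      have hqX := Submodule.finrank_quotient_add_finrank U
      have hqY := Submodule.finrank_quotient_add_finrank Z
      rw [hX, hfinU] at hqX
      rw [hY] at hqY
      have hdimq : finrank ℂ (X ⧸ U) = finrank ℂ (Y ⧸ Z) := by omega
      haveI hnt : Nontrivial (X ⧸ U) := Module.nontrivial_of_finrank_pos (R := ℂ) (by omega)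
      have hUM : U ≤ Submodule.comap M Z := Submodule.map_le_iff_le_comap.1 hZ.ge
      have hUN : U ≤ Submodule.comap N Z := Submodule.map_le_iff_le_comap.1 hNU
      obtain ⟨a, b, hab, x, hx0, hxe⟩ :=
        pencil_exists_singular hdimq (U.mapQ Z M hUM) (U.mapQ Z N hUN)
      have hUS : U ≤ Submodule.comap (a • M + b • N) Z := by
        intro y hy
        simp only [Submodule.mem_comap, LinearMap.add_apply, LinearMap.smul_apply]
        exact Z.add_mem (Z.smul_mem a (hUM hy)) (Z.smul_mem b (hUN hy))
      set Sb := U.mapQ Z (a • M + b • N) hUS with hSbdef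
      have hSb : ∀ q, Sb q = a • (U.mapQ Z M hUM) q + b • (U.mapQ Z N hUN) q := by
        intro q
        obtain ⟨y, rfl⟩ := Submodule.Quotient.mk_surjective U q
        simp [hSbdef, Submodule.mapQ_apply, Submodule.Quotient.mk_add, Submodule.Quotient.mk_smul]
      have hSsurj : Function.Surjective Sb := by
        intro q
        obtain ⟨y, rfl⟩ := Submodule.Quotient.mk_surjective Z q
        obtain ⟨x', hx'⟩ := hsurj a b hab y
        exact ⟨Submodule.Quotient.mk x', by rw [Submodule.mapQ_apply, hx']⟩
      have hSinj : Function.Injective Sb :=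
        (LinearMap.injective_iff_surjective_of_finrank_eq_finrank hdimq).2 hSsurj
      have hSx : Sb x = 0 := by rw [hSb]; exact hxe
      exact hx0 (hSinj (by simp [hSx]))



section T
variable (V : Fin (2 + 1) → Type*) [∀ j, AddCommGroup (V j)] [∀ j, Module ℂ (V j)]
  [∀ j, FiniteDimensional ℂ (V j)]
variable (V : Fin (2 + 1) → Type*) [∀ j, AddCommGroup (V j)] [∀ j, Module ℂ (V j)]
  [∀ j, FiniteDimensional ℂ (V j)]

private def tup (x : Module.Dual ℂ (V 0)) (y : Module.Dual ℂ (V 1)) (z : Module.Dual ℂ (V 2)) :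
    ∀ j : Fin (2 + 1), Module.Dual ℂ (V j) :=
  Fin.cons x (Fin.cons y (Fin.cons z finZeroElim))

private lemma tup_upd0 (x x' : Module.Dual ℂ (V 0)) (y : Module.Dual ℂ (V 1))
    (z : Module.Dual ℂ (V 2)) : Function.update (tup V x y z) 0 x' = tup V x' y z := by
  funext i; fin_cases i <;> rfl

private lemma tup_upd1 (x : Module.Dual ℂ (V 0)) (y y' : Module.Dual ℂ (V 1))
    (z : Module.Dual ℂ (V 2)) : Function.update (tup V x y z) 1 y' = tup V x y' z := by
  funext i; fin_cases i <;> rfl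

private lemma tup_upd2 (x : Module.Dual ℂ (V 0)) (y : Module.Dual ℂ (V 1))
    (z z' : Module.Dual ℂ (V 2)) : Function.update (tup V x y z) 2 z' = tup V x y z' := by
  funext i; fin_cases i <;> rfl

private lemma update02 (ξ : ∀ i, Module.Dual ℂ (V i)) (φ : Module.Dual ℂ (V 0))
    (lam : Module.Dual ℂ (V 2)) :
    Function.update (Function.update ξ 0 φ) 2 lam = tup V φ (ξ 1) lam := by
  funext i; fin_cases i <;> rfl

private lemma eval_pair {W : Type*} [AddCommGroup W] [Module ℂ W] [FiniteDimensional ℂ W]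
    (F : Module.Dual ℂ (Module.Dual ℂ W)) (lam : Module.Dual ℂ W) :
    lam ((Module.evalEquiv ℂ W).symm F) = F lam := by
  conv_rhs => rw [← (Module.evalEquiv ℂ W).apply_symm_apply F]
  rw [Module.evalEquiv_apply, Module.Dual.eval_apply]

private lemma dual_ext' {W : Type*} [AddCommGroup W] [Module ℂ W] [FiniteDimensional ℂ W]
    {v w : W} (h : ∀ lam : Module.Dual ℂ W, lam v = lam w) : v = w := by
  have h2 : ∀ lam : Module.Dual ℂ W, lam (v - w) = 0 := by
    intro lam; rw [map_sub, h lam, sub_self]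
  have := (Module.forall_dual_apply_eq_zero_iff ℂ (v - w)).1 h2
  exact sub_eq_zero.1 this

variable (A : MultilinearMap ℂ (fun j : Fin (2 + 1) => Module.Dual ℂ (V j)) ℂ)

private noncomputable def lamF (φ : Module.Dual ℂ (V 0)) (ξ1 : Module.Dual ℂ (V 1)) :
    Module.Dual ℂ (Module.Dual ℂ (V 2)) where
  toFun lam := A (tup V φ ξ1 lam)
  map_add' l1 l2 := by
    show A (tup V φ ξ1 (l1 + l2)) = A (tup V φ ξ1 l1) + A (tup V φ ξ1 l2)
    rw [← tup_upd2 V φ ξ1 l1 (l1 + l2), MultilinearMap.map_update_add, tup_upd2, tup_upd2]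
  map_smul' c l := by
    show A (tup V φ ξ1 (c • l)) = c • A (tup V φ ξ1 l)
    rw [← tup_upd2 V φ ξ1 l (c • l), MultilinearMap.map_update_smul, tup_upd2]

private lemma lamF_apply (φ : Module.Dual ℂ (V 0)) (ξ1 : Module.Dual ℂ (V 1))
    (lam : Module.Dual ℂ (V 2)) : lamF V A φ ξ1 lam = A (tup V φ ξ1 lam) := rfl

private lemma lamF_add (φ φ' : Module.Dual ℂ (V 0)) (ξ1 : Module.Dual ℂ (V 1)) :
    lamF V A (φ + φ') ξ1 = lamF V A φ ξ1 + lamF V A φ' ξ1 := by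
  ext lam
  show A (tup V (φ + φ') ξ1 lam) = A (tup V φ ξ1 lam) + A (tup V φ' ξ1 lam)
  rw [← tup_upd0 V φ (φ + φ') ξ1 lam, MultilinearMap.map_update_add, tup_upd0, tup_upd0]

private lemma lamF_smul (c : ℂ) (φ : Module.Dual ℂ (V 0)) (ξ1 : Module.Dual ℂ (V 1)) :
    lamF V A (c • φ) ξ1 = c • lamF V A φ ξ1 := by
  ext lam
  show A (tup V (c • φ) ξ1 lam) = c • A (tup V φ ξ1 lam)
  rw [← tup_upd0 V φ (c • φ) ξ1 lam, MultilinearMap.map_update_smul, tup_upd0]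

private noncomputable def Pl (ξ1 : Module.Dual ℂ (V 1)) :
    Module.Dual ℂ (V 0) →ₗ[ℂ] V 2 where
  toFun φ := (Module.evalEquiv ℂ (V 2)).symm (lamF V A φ ξ1)
  map_add' φ φ' := by
    show (Module.evalEquiv ℂ (V 2)).symm (lamF V A (φ + φ') ξ1) =
      (Module.evalEquiv ℂ (V 2)).symm (lamF V A φ ξ1) +
        (Module.evalEquiv ℂ (V 2)).symm (lamF V A φ' ξ1)
    rw [lamF_add, map_add]
  map_smul' c φ := by
    show (Module.evalEquiv ℂ (V 2)).symm (lamF V A (c • φ) ξ1) =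
      c • (Module.evalEquiv ℂ (V 2)).symm (lamF V A φ ξ1)
    rw [lamF_smul, map_smul]

private lemma apply_Pl (ξ1 : Module.Dual ℂ (V 1)) (φ : Module.Dual ℂ (V 0))
    (lam : Module.Dual ℂ (V 2)) : lam (Pl V A ξ1 φ) = A (tup V φ ξ1 lam) := by
  show lam ((Module.evalEquiv ℂ (V 2)).symm (lamF V A φ ξ1)) = _
  rw [eval_pair, lamF_apply]

private lemma Pl_smul_add (a b : ℂ) (f0 f1 : Module.Dual ℂ (V 1)) :
    Pl V A (a • f0 + b • f1) = a • Pl V A f0 + b • Pl V A f1 := by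
  ext φ
  apply dual_ext'
  intro lam
  rw [LinearMap.add_apply, LinearMap.smul_apply, LinearMap.smul_apply, map_add, map_smul,
    map_smul, apply_Pl, apply_Pl, apply_Pl]
  rw [← tup_upd1 V φ f0 (a • f0 + b • f1) lam, MultilinearMap.map_update_add,
    MultilinearMap.map_update_smul, MultilinearMap.map_update_smul, tup_upd1, tup_upd1]

private lemma Pl_surjective (hA : TensorNondegenerate A) {ξ1 : Module.Dual ℂ (V 1)}
    (h1 : ξ1 ≠ 0) : Function.Surjective (Pl V A ξ1) := by
  have hcond : ∀ i : Fin (2 + 1), i ≠ 0 → i ≠ 2 → (tup V 0 ξ1 0) i ≠ 0 := by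
    intro i hi0 hi2
    fin_cases i
    · exact absurd rfl hi0
    · exact h1
    · exact absurd rfl hi2
  intro v
  obtain ⟨φ, hφ⟩ := hA 2 (by decide) (tup V 0 ξ1 0) hcond v
  refine ⟨φ, dual_ext' ?_⟩
  intro lam
  rw [apply_Pl]
  have h := hφ lam
  rw [update02] at h
  exact h

end T

set_option maxHeartbeats 2000000 in
private lemma aux_identity (k : ℕ) (hk : 2 ≤ k) (V : Fin (2 + 1) → Type*)
    [∀ j, AddCommGroup (V j)] [∀ j, Module ℂ (V j)] [∀ j, FiniteDimensional ℂ (V j)]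
    (hdim0 : Module.finrank ℂ (V 0) = k + 1)
    (hdim1 : Module.finrank ℂ (V 1) = 2)
    (hdim2 : Module.finrank ℂ (V 2) = k)
    (A : MultilinearMap ℂ (fun j : Fin (2 + 1) => Module.Dual ℂ (V j)) ℂ)
    (hA : TensorNondegenerate A) :
    IsIdentityTensor ![k, 1, k - 1] A := by
  classical
  let b1 : Basis (Fin 2) ℂ (V 1) := Module.finBasisOfFinrankEq ℂ (V 1) hdim1
  let f : Basis (Fin 2) ℂ (Module.Dual ℂ (V 1)) := b1.dualBasis
  set M := Pl V A (f 0) with hM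
  set N := Pl V A (f 1) with hN
  -- surjectivity of all nonzero pencil combinations
  have hcomb : ∀ a b : ℂ, (a ≠ 0 ∨ b ≠ 0) → Function.Surjective (a • M + b • N) := by
    intro a b hab
    have hne : a • f 0 + b • f 1 ≠ 0 := by
      intro h
      have h0 : (a • f 0 + b • f 1) (b1 0) = 0 := by rw [h]; rfl
      have h1 : (a • f 0 + b • f 1) (b1 1) = 0 := by rw [h]; rfl
      simp only [LinearMap.add_apply, LinearMap.smul_apply, smul_eq_mul, f,
        Basis.dualBasis_apply_self] at h0 h1
      norm_num at h0 h1
      rcases hab with hh | hh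
      · exact hh h0
      · exact hh h1
    have hs := Pl_surjective V A hA hne
    rwa [Pl_smul_add, ← hM, ← hN] at hs
  have hW : finrank ℂ (Module.Dual ℂ (V 0)) = k + 1 := by
    rw [Subspace.dual_finrank_eq, hdim0]
  have hMsurj : Function.Surjective M := by
    have h := hcomb 1 0 (Or.inl one_ne_zero)
    have he : (1 : ℂ) • M + (0 : ℂ) • N = M := by simp
    rwa [he] at h
  have hkerrank : finrank ℂ (LinearMap.ker M) = 1 := by
    have h := LinearMap.finrank_range_add_finrank_ker M
    rw [LinearMap.range_eq_top.2 hMsurj, finrank_top, hdim2, hW] at h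
    omega
  obtain ⟨u0, hu0mem, hu0ne⟩ : ∃ x ∈ LinearMap.ker M, x ≠ 0 := by
    apply Submodule.exists_mem_ne_zero_of_ne_bot
    intro h
    rw [h, finrank_bot] at hkerrank
    omega
  have hkerle : LinearMap.ker M ≤ Submodule.span ℂ {u0} := by
    have hle : Submodule.span ℂ {u0} ≤ LinearMap.ker M :=
      Submodule.span_le.2 (Set.singleton_subset_iff.2 hu0mem)
    have he := Submodule.eq_of_le_of_finrank_eq hle
      (by rw [hkerrank, finrank_span_singleton hu0ne])
    exact he.ge
  -- the chain
  let u : ℕ → Module.Dual ℂ (V 0) :=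
    fun n => Nat.rec u0 (fun _ w => Function.surjInv hMsurj (N w)) n
  have hu0 : u 0 = u0 := rfl
  have hurec : ∀ n, M (u (n + 1)) = N (u n) := fun n => Function.surjInv_eq hMsurj _
  have hMu0 : M (u 0) = 0 := hu0mem
  have hu0ne' : u 0 ≠ 0 := hu0ne
  have hkerle' : LinearMap.ker M ≤ Submodule.span ℂ {u 0} := hkerle
  have hindu : LinearIndependent ℂ (fun i : Fin (k + 1) => u i) :=
    chain_linearIndependent hW hdim2 M N hcomb u hu0ne' hMu0 hkerle' hurec (k + 1) le_rfl
  have hindw : LinearIndependent ℂ (fun j : Fin k => M (u (j + 1))) :=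
    image_chain_linearIndependent M u hindu hkerle'
  haveI hne1 : Nonempty (Fin k) := ⟨⟨0, by omega⟩⟩
  let bw : Basis (Fin k) ℂ (V 2) :=
    basisOfLinearIndependentOfCardEqFinrank hindw (by simp [hdim2])
  have hbw : ∀ j : Fin k, bw j = M (u ((j : ℕ) + 1)) := fun j => by
    rw [show bw j = _ from congrFun (coe_basisOfLinearIndependentOfCardEqFinrank hindw _) j]
  let c : Fin k → ℂ := fun j => bw.repr (N (u k)) j
  let t : ℕ → ℂ := fun s =>
    if h0 : s = 0 then 1 else if h : s ≤ k then -c ⟨k - s, by omega⟩ else 0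
  let u' : ℕ → Module.Dual ℂ (V 0) := fun i => ∑ s ∈ Finset.range (i + 1), t s • u (i - s)
  have ht0 : t 0 = 1 := rfl
  have hu'0 : u' 0 = u 0 := by
    show ∑ s ∈ Finset.range 1, t s • u (0 - s) = u 0
    rw [Finset.sum_range_one, ht0, one_smul]
  have hu'rec : ∀ n, M (u' (n + 1)) = N (u' n) := by
    intro n
    have h1 : M (u' (n + 1)) = ∑ s ∈ Finset.range (n + 2), t s • M (u (n + 1 - s)) := by
      show M (∑ s ∈ Finset.range (n + 2), t s • u (n + 1 - s)) = _
      rw [map_sum]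
      exact Finset.sum_congr rfl fun s _ => by rw [map_smul]
    have h2 : N (u' n) = ∑ s ∈ Finset.range (n + 1), t s • N (u (n - s)) := by
      show N (∑ s ∈ Finset.range (n + 1), t s • u (n - s)) = _
      rw [map_sum]
      exact Finset.sum_congr rfl fun s _ => by rw [map_smul]
    rw [h1, h2, Finset.sum_range_succ]
    have h3 : n + 1 - (n + 1) = 0 := by omega
    rw [h3, hMu0, smul_zero, add_zero]
    apply Finset.sum_congr rfl
    intro s hs
    have hs' : s ≤ n := Nat.lt_succ_iff.1 (Finset.mem_range.1 hs)
    have h4 : n + 1 - s = (n - s) + 1 := by omega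
    rw [h4, hurec]
  have hu'0ne : u' 0 ≠ 0 := by rw [hu'0]; exact hu0ne'
  have hMu'0 : M (u' 0) = 0 := by rw [hu'0]; exact hMu0
  have hkerle'' : LinearMap.ker M ≤ Submodule.span ℂ {u' 0} := by rw [hu'0]; exact hkerle'
  have hindu' : LinearIndependent ℂ (fun i : Fin (k + 1) => u' i) :=
    chain_linearIndependent hW hdim2 M N hcomb u' hu'0ne hMu'0 hkerle'' hu'rec (k + 1) le_rfl
  have hindw' : LinearIndependent ℂ (fun j : Fin k => M (u' (j + 1))) :=
    image_chain_linearIndependent M u' hindu' hkerle''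
  haveI hne2 : Nonempty (Fin (k + 1)) := ⟨⟨0, by omega⟩⟩
  let bW' : Basis (Fin (k + 1)) ℂ (Module.Dual ℂ (V 0)) :=
    basisOfLinearIndependentOfCardEqFinrank hindu' (by simp [hW])
  have hbW' : ∀ i : Fin (k + 1), bW' i = u' (i : ℕ) := fun i => by
    rw [show bW' i = _ from congrFun (coe_basisOfLinearIndependentOfCardEqFinrank hindu' _) i]
  let bw' : Basis (Fin k) ℂ (V 2) :=
    basisOfLinearIndependentOfCardEqFinrank hindw' (by simp [hdim2])
  have hbw' : ∀ j : Fin k, bw' j = M (u' ((j : ℕ) + 1)) := fun j => by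
    rw [show bw' j = _ from congrFun (coe_basisOfLinearIndependentOfCardEqFinrank hindw' _) j]
  -- the key vanishing
  have hNuk : N (u k) = ∑ j : Fin k, c j • bw j := (bw.sum_repr (N (u k))).symm
  have hNk0 : N (u' k) = 0 := by
    have h1 : N (u' k) = ∑ s ∈ Finset.range (k + 1), t s • N (u (k - s)) := by
      show N (∑ s ∈ Finset.range (k + 1), t s • u (k - s)) = _
      rw [map_sum]
      exact Finset.sum_congr rfl fun s _ => by rw [map_smul]
    rw [h1, Finset.sum_range_succ']
    have h2 : ∀ (s : ℕ) (hs : s < k), t (s + 1) • N (u (k - (s + 1))) =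
        -(c (Fin.rev ⟨s, hs⟩) • bw (Fin.rev ⟨s, hs⟩)) := by
      intro s hs
      have hti : t (s + 1) = -c (Fin.rev ⟨s, hs⟩) := by
        show (if h0 : s + 1 = 0 then (1:ℂ)
            else if h : s + 1 ≤ k then -c ⟨k - (s+1), by omega⟩ else 0)
          = -c (Fin.rev ⟨s, hs⟩)
        rw [dif_neg (by omega), dif_pos (by omega)]
        have hfin : (⟨k - (s + 1), by omega⟩ : Fin k) = Fin.rev ⟨s, hs⟩ := by
          rw [Fin.ext_iff, Fin.val_rev]
        exact congrArg (fun x : Fin k => -c x) hfin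
      have hNi : N (u (k - (s + 1))) = bw (Fin.rev ⟨s, hs⟩) := by
        have hval : (Fin.rev (⟨s, hs⟩ : Fin k) : ℕ) = k - (s + 1) := Fin.val_rev _
        rw [hbw, hval]
        rw [← hurec (k - (s + 1))]
      rw [hti, hNi, neg_smul]
    have h3 : ∑ s ∈ Finset.range k, t (s + 1) • N (u (k - (s + 1))) =
        -∑ j : Fin k, c j • bw j := by
      rw [Finset.sum_range fun s => t (s + 1) • N (u (k - (s + 1)))]
      rw [Finset.sum_congr rfl fun (i : Fin k) _ => h2 (i : ℕ) i.isLt]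
      rw [← Finset.sum_neg_distrib]
      refine Fintype.sum_equiv Fin.revPerm _ _ fun i => ?_
      simp
    rw [h3, ht0, one_smul, ← hNuk]
    simp
  -- bases of the V j
  let e0raw : Basis (Fin (k + 1)) ℂ (V 0) :=
    bW'.dualBasis.map (Module.evalEquiv ℂ (V 0)).symm
  let e0 : Basis (Fin (k + 1)) ℂ (V 0) := e0raw.reindex Fin.revPerm
  have he0pair : ∀ (a : Fin (k + 1)) (i : Fin (k + 1)),
      bW' a (e0 i) = if a = Fin.rev i then 1 else 0 := by
    intro a i
    have h1 : e0 i = (Module.evalEquiv ℂ (V 0)).symm (bW'.dualBasis (Fin.rev i)) := by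
      show e0raw.reindex Fin.revPerm i = _
      rw [Basis.reindex_apply, Basis.map_apply]
      rfl
    rw [h1, eval_pair, Basis.dualBasis_apply_self]
  have hkk : k = (k - 1) + 1 := by omega
  let e2 : Basis (Fin ((k - 1) + 1)) ℂ (V 2) := bw'.reindex (Fin.revPerm.trans (finCongr hkk))
  let e : ∀ j : Fin (2 + 1), Basis (Fin (![k, 1, k - 1] j + 1)) ℂ (V j) := fun j =>
    match j with
    | ⟨0, _⟩ => e0
    | ⟨1, _⟩ => b1
    | ⟨2, _⟩ => e2
  -- the model multilinear map
  set G : MultilinearMap ℂ (fun j : Fin (2 + 1) => Module.Dual ℂ (V j)) ℂ :=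
    ∑ ind ∈ Finset.univ.filter
        (fun ind : ∀ j : Fin (2 + 1), Fin (![k, 1, k - 1] j + 1) =>
          (ind 0 : ℕ) = ∑ j ∈ Finset.univ.erase (0 : Fin (2 + 1)), (ind j : ℕ)),
      (MultilinearMap.mkPiAlgebra ℂ (Fin (2 + 1)) ℂ).compLinearMap
        (fun j => Module.Dual.eval ℂ (V j) (e j (ind j))) with hGdef
  have hGapply : ∀ ξ : ∀ i, Module.Dual ℂ (V i), G ξ =
      ∑ ind ∈ Finset.univ.filter
          (fun ind : ∀ j : Fin (2 + 1), Fin (![k, 1, k - 1] j + 1) =>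
            (ind 0 : ℕ) = ∑ j ∈ Finset.univ.erase (0 : Fin (2 + 1)), (ind j : ℕ)),
        ∏ j, ξ j (e j (ind j)) := by
    intro ξ
    rw [hGdef, MultilinearMap.sum_apply]
    apply Finset.sum_congr rfl
    intro ind _
    rw [MultilinearMap.compLinearMap_apply, MultilinearMap.mkPiAlgebra_apply]
    apply Finset.prod_congr rfl
    intro j _
    rw [Module.Dual.eval_apply]
  have hsum2 : ∀ ind : ∀ j : Fin (2 + 1), Fin (![k, 1, k - 1] j + 1),
      (∑ j ∈ Finset.univ.erase (0 : Fin (2 + 1)), (ind j : ℕ)) = (ind 1 : ℕ) + (ind 2 : ℕ) := by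
    intro ind
    rw [show (Finset.univ.erase (0 : Fin (2 + 1))) = {1, 2} from by decide]
    rw [Finset.sum_insert (by decide), Finset.sum_singleton]
  -- the main computation
  have hAG : A = G := by
    apply Basis.ext_multilinear (fun j => (e j).dualBasis)
    intro a
    have ha0lt : (a 0 : ℕ) < k + 1 := (a 0).isLt
    have hv0 : (![k, 1, k - 1] : Fin (2 + 1) → ℕ) 0 = k := rfl
    have hv1 : (![k, 1, k - 1] : Fin (2 + 1) → ℕ) 1 = 1 := rfl
    have hv2 : (![k, 1, k - 1] : Fin (2 + 1) → ℕ) 2 = k - 1 := rfl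
    have ha1lt : (a 1 : ℕ) < 2 := (a 1).isLt
    have ha2lt : (a 2 : ℕ) < (k - 1) + 1 := (a 2).isLt
    have harg : (fun j => (e j).dualBasis (a j)) =
        tup V ((e 0).dualBasis (a 0)) ((e 1).dualBasis (a 1)) ((e 2).dualBasis (a 2)) := by
      funext j; fin_cases j <;> rfl
    -- RHS
    have hG : G (fun j => (e j).dualBasis (a j)) =
        if (a 0 : ℕ) = (a 1 : ℕ) + (a 2 : ℕ) then 1 else 0 := by
      rw [hGapply]
      have hterm : ∀ ind : ∀ j : Fin (2 + 1), Fin (![k, 1, k - 1] j + 1),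
          (∏ j, (e j).dualBasis (a j) ((e j) (ind j))) = if ind = a then 1 else 0 := by
        intro ind
        rw [Finset.prod_congr rfl fun j _ => Basis.dualBasis_apply_self (e j) (a j) (ind j)]
        rw [Finset.prod_boole]
        congr 1
        simp only [Finset.mem_univ, forall_true_left, eq_iff_iff]
        exact ⟨fun h => funext h, fun h j => congrFun h j⟩
      rw [Finset.sum_congr rfl fun ind _ => hterm ind]
      rw [Finset.sum_ite_eq']
      simp only [Finset.mem_filter, Finset.mem_univ, true_and]
      simp only [hsum2 a]
    rw [hG, harg, ← apply_Pl]
    -- identify the dual basis vectors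
    have hdb0 : (e 0).dualBasis (a 0) = bW' (Fin.rev (a 0)) := by
      refine Basis.ext e0 fun i => ?_
      rw [show (e 0).dualBasis (a 0) (e0 i) = if i = a 0 then 1 else 0 from
        by convert Basis.dualBasis_apply_self (e 0) (a 0) i <;> rfl]
      rw [he0pair]
      by_cases h : i = a 0
      · rw [if_pos h, if_pos (by rw [h])]
      · rw [if_neg h, if_neg (fun hc => h (Fin.rev_injective (by rw [← hc])))]
    have hlam : ∀ j : Fin k, ((e 2).dualBasis (a 2)) (bw' j) =
        if k - ((j : ℕ) + 1) = (a 2 : ℕ) then 1 else 0 := by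
      intro j
      have h1 : bw' j = e2 ((Fin.revPerm.trans (finCongr hkk)) j) := by
        show bw' j = bw'.reindex _ _
        rw [Basis.reindex_apply]
        congr 1
        simp
      rw [h1]
      rw [show ((e 2).dualBasis (a 2)) (e2 ((Fin.revPerm.trans (finCongr hkk)) j)) =
        if (Fin.revPerm.trans (finCongr hkk)) j = a 2 then 1 else 0 from
        by convert Basis.dualBasis_apply_self (e 2) (a 2) ((Fin.revPerm.trans (finCongr hkk)) j) <;> rfl]
      congr 1
      erw [Fin.ext_iff]
      simp only [Equiv.trans_apply, finCongr_apply, Fin.coe_cast, Fin.revPerm_apply, Fin.val_rev]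
    rw [hdb0, hbW']
    -- case split on a 1
    have h1cases : (a 1 : ℕ) = 0 ∨ (a 1 : ℕ) = 1 := by omega
    rcases h1cases with h1 | h1
    · -- a 1 = 0 : the map M
      have ha1 : (e 1).dualBasis (a 1) = f 0 := congrArg (e 1).dualBasis (Fin.ext h1)
      rw [ha1, ← hM]
      by_cases h0 : (a 0 : ℕ) = k
      · have hrev : (Fin.rev (a 0) : ℕ) = 0 := by rw [Fin.val_rev]; simp only [hv0]; omega
        erw [hrev, hMu'0, map_zero]
        rw [if_neg (by omega)]
      · have hrev : (Fin.rev (a 0) : ℕ) = (k - (a 0 : ℕ) - 1) + 1 := by rw [Fin.val_rev]; simp only [hv0]; omega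
        erw [hrev, ← hbw' ⟨k - (a 0 : ℕ) - 1, by omega⟩]
        rw [hlam]
        simp only [Fin.val_mk]
        apply if_congr _ rfl rfl
        constructor
        · intro h; omega
        · intro h; omega
    · -- a 1 = 1 : the map N
      have ha1 : (e 1).dualBasis (a 1) = f 1 := congrArg (e 1).dualBasis (Fin.ext h1)
      rw [ha1, ← hN]
      by_cases h0 : (a 0 : ℕ) = 0
      · have hrev : (Fin.rev (a 0) : ℕ) = k := by rw [Fin.val_rev]; simp only [hv0]; omega
        erw [hrev, hNk0, map_zero]
        rw [if_neg (by omega)]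
      · have hrev : (Fin.rev (a 0) : ℕ) = k - (a 0 : ℕ) := by rw [Fin.val_rev]; simp only [hv0]; omega
        erw [hrev, ← hu'rec (k - (a 0 : ℕ))]
        rw [show k - (a 0 : ℕ) + 1 = (k - (a 0 : ℕ)) + 1 from rfl]
        rw [← hbw' ⟨k - (a 0 : ℕ), by omega⟩]
        rw [hlam]
        simp only [Fin.val_mk]
        apply if_congr _ rfl rfl
        constructor
        · intro h; omega
        · intro h; omega
  refine ⟨e, fun ξ => ?_⟩
  rw [hAG]
  exact hGapply ξ

/-- All nondegenerate matrices of format `(k+1) × 2 × k` are identities, and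
any two of them are `GL(V 0) × GL(V 1) × GL(V 2)`-equivalent (the action of `g` on a tensor
viewed as a multilinear form on the duals is `(g • A) ξ = A (fun i => ξ i ∘ g i)`). -/
theorem nondegenerate_two_k_kplusone_is_identity
    (k : ℕ) (hk : 2 ≤ k) (V : Fin (2 + 1) → Type*)
    [∀ j, AddCommGroup (V j)] [∀ j, Module ℂ (V j)] [∀ j, FiniteDimensional ℂ (V j)]
    (hdim0 : Module.finrank ℂ (V 0) = k + 1)
    (hdim1 : Module.finrank ℂ (V 1) = 2)
    (hdim2 : Module.finrank ℂ (V 2) = k)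
    (A : MultilinearMap ℂ (fun j : Fin (2 + 1) => Module.Dual ℂ (V j)) ℂ)
    (hA : TensorNondegenerate A) :
    IsIdentityTensor ![k, 1, k - 1] A ∧
    ∀ B : MultilinearMap ℂ (fun j : Fin (2 + 1) => Module.Dual ℂ (V j)) ℂ,
      TensorNondegenerate B →
        ∃ g : ∀ i, V i ≃ₗ[ℂ] V i,
          B = A.compLinearMap fun i => ((g i : V i →ₗ[ℂ] V i)).dualMap := by
  obtain ⟨e, he⟩ := aux_identity k hk V hdim0 hdim1 hdim2 A hA
  refine ⟨⟨e, he⟩, ?_⟩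
  intro B hB
  obtain ⟨e', he'⟩ := aux_identity k hk V hdim0 hdim1 hdim2 B hB
  refine ⟨fun i => (e i).equiv (e' i) (Equiv.refl _), ?_⟩
  apply MultilinearMap.ext
  intro ξ
  rw [he' ξ, MultilinearMap.compLinearMap_apply, he]
  apply Finset.sum_congr rfl
  intro ind _
  apply Finset.prod_congr rfl
  intro j _
  rw [LinearMap.dualMap_apply]
  congr 1
  exact (Basis.equiv_apply (e j) (ind j) (e' j) (Equiv.refl _)).symm
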